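/- Let q be an odd prime power, m > 3, 2 ≤ k ≤ m-2, and let c(u,v) with u ≠ 0 and v ≠ 0 be a codeword of C_f. Then the number of zero entries of c(u,v) is at most Σ_{i=1}^{m-1} C(m-1,i)(q-1)^i + Σ_{i=1}^{k} C(m-1,i)(q-1)^i, and at least Σ_{i=k+1}^{m-1} C(m-1,i)(q-1)^i. -/

import Mathlib

open Finset

lemma card_support_slice {F : Type*} [Fintype F] [DecidableEq F] [Zero F]
    {A : Type*} [Fintype A] [DecidableEq A] (s : Finset A) (i : ℕ) :
    (Finset.univ.filter fun f : A → F =>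
        (∀ a, a ∉ s → f a = 0) ∧ (Finset.univ.filter fun a => f a ≠ 0).card = i).card
      = s.card.choose i * (Fintype.card F - 1) ^ i := by
  classical
  rw [Finset.card_eq_sum_card_fiberwise
    (f := fun f : A → F => Finset.univ.filter fun a => f a ≠ 0)
    (t := s.powersetCard i)]
  · rw [Finset.sum_congr rfl (g := fun _ => (Fintype.card F - 1) ^ i), Finset.sum_const,
      Finset.card_powersetCard, smul_eq_mul]
    intro t ht
    rw [Finset.mem_powersetCard] at ht
    obtain ⟨hts, htc⟩ := ht
    have hset : ((Finset.univ.filter fun f : A → F =>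
        (∀ a, a ∉ s → f a = 0) ∧ (Finset.univ.filter fun a => f a ≠ 0).card = i).filter
          fun f => (Finset.univ.filter fun a => f a ≠ 0) = t)
        = Fintype.piFinset (fun a => if a ∈ t then Finset.univ.erase (0 : F) else {0}) := by
      ext f
      simp only [Finset.mem_filter, Finset.mem_univ, true_and, Fintype.mem_piFinset]
      constructor
      · rintro ⟨-, hft⟩
        intro a
        by_cases hat : a ∈ t
        · have : a ∈ Finset.univ.filter fun a => f a ≠ 0 := hft ▸ hat
          simp only [Finset.mem_filter] at this
          simp [hat, this.2]
        · have : a ∉ Finset.univ.filter fun a => f a ≠ 0 := hft ▸ hat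
          simp only [Finset.mem_filter, Finset.mem_univ, true_and, not_not] at this
          simp [hat, this]
      · intro h
        have hsupp : (Finset.univ.filter fun a => f a ≠ 0) = t := by
          ext a
          simp only [Finset.mem_filter, Finset.mem_univ, true_and]
          have := h a
          by_cases hat : a ∈ t <;> simp [hat] at this <;> simp [hat, this]
        refine ⟨⟨fun a has => ?_, by rw [hsupp, htc]⟩, hsupp⟩
        by_contra hfa
        exact has (hts (hsupp ▸ (by simp [hfa] : a ∈ Finset.univ.filter fun a => f a ≠ 0)))
    rw [hset, Fintype.card_piFinset]
    have : ∀ a : A, ((if a ∈ t then Finset.univ.erase (0 : F) else {0}).card)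
        = if a ∈ t then Fintype.card F - 1 else 1 := by
      intro a
      split <;> simp [Finset.card_erase_of_mem]
    simp only [this]
    rw [Finset.prod_ite_mem, Finset.univ_inter, Finset.prod_const, htc]
  · intro f hf
    rw [Finset.mem_coe, Finset.mem_filter] at hf
    rw [Finset.mem_coe, Finset.mem_powersetCard]
    exact ⟨fun a ha => by
      simp only [Finset.mem_filter, Finset.mem_univ, true_and] at ha
      by_contra h
      exact ha (hf.2.1 a h), hf.2.2⟩

lemma card_support_range {F : Type*} [Fintype F] [DecidableEq F] [Zero F]
    {A : Type*} [Fintype A] [DecidableEq A] (s : Finset A) (a b : ℕ) :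
    (Finset.univ.filter fun f : A → F =>
        (∀ j, j ∉ s → f j = 0) ∧ (Finset.univ.filter fun j => f j ≠ 0).card ∈ Finset.Icc a b).card
      = ∑ i ∈ Finset.Icc a b, s.card.choose i * (Fintype.card F - 1) ^ i := by
  classical
  rw [Finset.card_eq_sum_card_fiberwise
    (f := fun f : A → F => (Finset.univ.filter fun j => f j ≠ 0).card)
    (t := Finset.Icc a b)]
  · refine Finset.sum_congr rfl fun i hi => ?_
    rw [← card_support_slice (F := F) s i]
    congr 1
    ext f
    simp only [Finset.mem_filter, Finset.mem_univ, true_and]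
    constructor
    · rintro ⟨⟨h1, -⟩, h3⟩; exact ⟨h1, h3⟩
    · rintro ⟨h1, h2⟩; exact ⟨⟨h1, h2 ▸ hi⟩, h2⟩
  · intro f hf
    rw [Finset.mem_coe, Finset.mem_filter] at hf
    exact hf.2.2

/-- The function f of the paper: f(x) = α_{w(x)} if w(x) ≤ k, and 0 otherwise,
where w(x) is the number of nonzero coordinates of x. -/
def fDH {F : Type*} [Field F] [DecidableEq F] {m : ℕ} (k : ℕ) (α : ℕ → F)
    (x : Fin m → F) : F :=
  if (Finset.univ.filter fun j => x j ≠ 0).card ≤ k then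
    α ((Finset.univ.filter fun j => x j ≠ 0).card)
  else 0

theorem stmt8 {F : Type*} [Field F] [Fintype F] [DecidableEq F] (q m k : ℕ)
    (hq : Fintype.card F = q) (hodd : Odd q) (hm : 3 < m) (hk1 : 2 ≤ k) (hk2 : k ≤ m - 2)
    (α : ℕ → F) (hα : ∀ i, 1 ≤ i → i ≤ k → α i ≠ 0)
    (u : F) (v : Fin m → F) (hu : u ≠ 0) (hv : v ≠ 0) :
    (∑ i ∈ Finset.Icc (k + 1) (m - 1), (m - 1).choose i * (q - 1) ^ i ≤
      Set.ncard {x : Fin m → F | x ≠ 0 ∧ u * fDH k α x + ∑ j, v j * x j = 0}) ∧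
    (Set.ncard {x : Fin m → F | x ≠ 0 ∧ u * fDH k α x + ∑ j, v j * x j = 0} ≤
      ∑ i ∈ Finset.Icc 1 (m - 1), (m - 1).choose i * (q - 1) ^ i +
        ∑ i ∈ Finset.Icc 1 k, (m - 1).choose i * (q - 1) ^ i) := by
  classical
  subst hq
  have hq3 : 3 ≤ Fintype.card F := by
    have h2 : 1 < Fintype.card F := Fintype.one_lt_card
    obtain ⟨r, hr⟩ := hodd
    omega
  obtain ⟨j0, hj0⟩ : ∃ j0, v j0 ≠ 0 := Function.ne_iff.mp hv
  -- replace ncard by Finset.card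
  have hsetZ : {x : Fin m → F | x ≠ 0 ∧ u * fDH k α x + ∑ j, v j * x j = 0}
      = ↑(Finset.univ.filter fun x : Fin m → F =>
          x ≠ 0 ∧ u * fDH k α x + ∑ j, v j * x j = 0) := by
    ext x; simp
  rw [hsetZ, Set.ncard_coe_finset]
  set Z := Finset.univ.filter fun x : Fin m → F =>
      x ≠ 0 ∧ u * fDH k α x + ∑ j, v j * x j = 0 with hZ
  -- basic support facts
  set E := Finset.univ.erase j0 with hE
  have hEcard : E.card = m - 1 := by
    rw [hE, Finset.card_erase_of_mem (Finset.mem_univ _), Finset.card_univ, Fintype.card_fin]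
  have hj0E : j0 ∉ E := by simp [hE]
  have hsuppsub : ∀ y : Fin m → F, y j0 = 0 →
      (Finset.univ.filter fun j => y j ≠ 0) ⊆ E := by
    intro y hy j hj
    simp only [Finset.mem_filter, Finset.mem_univ, true_and] at hj
    simp only [hE, Finset.mem_erase, Finset.mem_univ, and_true]
    intro hjj0; exact hj (hjj0 ▸ hy)
  have hwtle : ∀ y : Fin m → F, y j0 = 0 →
      (Finset.univ.filter fun j => y j ≠ 0).card ≤ m - 1 := by
    intro y hy
    rw [← hEcard]
    exact Finset.card_le_card (hsuppsub y hy)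
  have hupd0 : ∀ y : Fin m → F, y j0 = 0 → Function.update y j0 (0 : F) = y := by
    intro y hy
    rw [← hy]; exact Function.update_eq_self j0 y
  have hupdsupp : ∀ (y : Fin m → F), y j0 = 0 → ∀ t : F, t ≠ 0 →
      (Finset.univ.filter fun j => Function.update y j0 t j ≠ 0)
        = insert j0 (Finset.univ.filter fun j => y j ≠ 0) := by
    intro y hy t ht
    ext j
    by_cases hj : j = j0
    · subst hj
      simp [Function.update_self, ht, hy]
    · simp [Function.update_of_ne hj, hj]
  have hupdwt : ∀ (y : Fin m → F), y j0 = 0 → ∀ t : F, t ≠ 0 →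
      (Finset.univ.filter fun j => Function.update y j0 t j ≠ 0).card
        = (Finset.univ.filter fun j => y j ≠ 0).card + 1 := by
    intro y hy t ht
    rw [hupdsupp y hy t ht, Finset.card_insert_of_notMem]
    simp [hy]
  have hsumupd : ∀ (y : Fin m → F), y j0 = 0 → ∀ t : F,
      ∑ j, v j * Function.update y j0 t j = (∑ j, v j * y j) + v j0 * t := by
    intro y hy t
    rw [← Finset.sum_erase_add _ _ (Finset.mem_univ j0),
      ← Finset.sum_erase_add (f := fun j => v j * y j) _ (Finset.mem_univ j0)]
    have hcong : ∑ j ∈ Finset.univ.erase j0, v j * Function.update y j0 t j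
        = ∑ j ∈ Finset.univ.erase j0, v j * y j := by
      refine Finset.sum_congr rfl fun j hj => ?_
      rw [Function.update_of_ne (Finset.ne_of_mem_erase hj)]
    rw [hcong, Function.update_self, hy]
    ring
  -- the master decomposition of fiber elements
  have hkey : ∀ y : Fin m → F, y j0 = 0 →
      ∀ x ∈ Z.filter (fun x => Function.update x j0 0 = y),
      x = Function.update y j0 (x j0) ∧ x ≠ 0 ∧
        u * fDH k α x + ((∑ j, v j * y j) + v j0 * (x j0)) = 0 := by
    intro y hy x hx
    rw [Finset.mem_filter] at hx
    obtain ⟨hxZ, hxy⟩ := hx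
    rw [hZ, Finset.mem_filter] at hxZ
    have hxeq : x = Function.update y j0 (x j0) := by
      funext j
      by_cases hj : j = j0
      · subst hj; rw [Function.update_self]
      · rw [Function.update_of_ne hj, ← hxy, Function.update_of_ne hj]
    have hsum : ∑ j, v j * x j = (∑ j, v j * y j) + v j0 * (x j0) := by
      conv_lhs => rw [hxeq]
      exact hsumupd y hy (x j0)
    refine ⟨hxeq, hxZ.2.1, ?_⟩
    rw [← hsum]
    exact hxZ.2.2
  -- cardinality lemma for the weight-window sets
  have hwindow : ∀ a b : ℕ,
      (Finset.univ.filter fun y : Fin m → F =>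
        y j0 = 0 ∧ (Finset.univ.filter fun j => y j ≠ 0).card ∈ Finset.Icc a b).card
      = ∑ i ∈ Finset.Icc a b, (m - 1).choose i * (Fintype.card F - 1) ^ i := by
    intro a b
    have h := card_support_range (F := F) E a b
    rw [hEcard] at h
    rw [← h]
    congr 1
    ext y
    simp only [Finset.mem_filter, Finset.mem_univ, true_and]
    constructor
    · rintro ⟨h1, h2⟩
      refine ⟨fun j hj => ?_, h2⟩
      have : j = j0 := by
        by_contra hne
        exact hj (by simp [hE, hne])
      exact this ▸ h1
    · rintro ⟨h1, h2⟩
      exact ⟨h1 j0 hj0E, h2⟩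
  constructor
  · -- LOWER BOUND
    set G := Finset.univ.filter (fun y : Fin m → F =>
      y j0 = 0 ∧ (Finset.univ.filter fun j => y j ≠ 0).card ∈ Finset.Icc (k+1) (m-1)) with hG
    have hGcard : G.card
        = ∑ i ∈ Finset.Icc (k+1) (m-1), (m - 1).choose i * (Fintype.card F - 1) ^ i :=
      hwindow (k+1) (m-1)
    rw [← hGcard]
    apply Finset.card_le_card_of_injOn
      (fun y => Function.update y j0 (-(∑ j, v j * y j) / v j0))
    · intro y hyG
      rw [hG, Finset.mem_coe, Finset.mem_filter] at hyG
      obtain ⟨-, hy0, hyw⟩ := hyG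
      rw [Finset.mem_Icc] at hyw
      set t := -(∑ j, v j * y j) / v j0 with hts
      set x := Function.update y j0 t with hxd
      have hwtx : k + 1 ≤ (Finset.univ.filter fun j => x j ≠ 0).card := by
        by_cases ht : t = 0
        · rw [hxd, ht, hupd0 y hy0]; exact hyw.1
        · rw [hxd, hupdwt y hy0 t ht]; omega
      have hxne : x ≠ 0 := by
        have hpos : 0 < (Finset.univ.filter fun j => y j ≠ 0).card := by omega
        obtain ⟨j, hj⟩ := Finset.card_pos.mp hpos
        simp only [Finset.mem_filter, Finset.mem_univ, true_and] at hj
        have hjne : j ≠ j0 := fun h => hj (h ▸ hy0)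
        intro h0
        have : x j = 0 := congrFun h0 j
        rw [hxd, Function.update_of_ne hjne] at this
        exact hj this
      have hfx : fDH k α x = 0 := by
        rw [fDH, if_neg]
        omega
      rw [hZ, Finset.mem_coe, Finset.mem_filter]
      refine ⟨Finset.mem_univ _, hxne, ?_⟩
      show u * fDH k α x + ∑ j, v j * x j = 0
      rw [hfx, mul_zero, zero_add, hxd, hsumupd y hy0 t, hts]
      field_simp
      ring
    · intro y1 hy1 y2 hy2 heq
      simp only [Finset.coe_filter, Set.mem_setOf_eq, hG, Finset.mem_univ, true_and] at hy1 hy2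
      funext j
      by_cases hj : j = j0
      · rw [hj, hy1.1, hy2.1]
      · have h2 := congrFun heq j
        simpa [Function.update_of_ne hj] using h2
  · -- UPPER BOUND
    set Y := Finset.univ.filter (fun y : Fin m → F => y j0 = 0) with hY
    have hYmem : ∀ y : Fin m → F, y ∈ Y ↔ y j0 = 0 := by
      intro y; simp [hY]
    have hYsum : Z.card
        = ∑ y ∈ Y, (Z.filter fun x => Function.update x j0 0 = y).card := by
      apply Finset.card_eq_sum_card_fiberwise
      intro x hx
      rw [Finset.mem_coe, hYmem]
      exact Function.update_self j0 0 x
    -- big and small window cards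
    have hYcard : Y.card
        = 1 + ∑ i ∈ Finset.Icc 1 (m-1), (m - 1).choose i * (Fintype.card F - 1) ^ i := by
      have h1 : Y = Finset.univ.filter (fun y : Fin m → F =>
          y j0 = 0 ∧ (Finset.univ.filter fun j => y j ≠ 0).card ∈ Finset.Icc 0 (m-1)) := by
        ext y
        simp only [hY, Finset.mem_filter, Finset.mem_univ, true_and, Finset.mem_Icc]
        exact ⟨fun h => ⟨h, Nat.zero_le _, hwtle y h⟩, fun h => h.1⟩
      have h2 : Finset.Icc 0 (m-1) = insert 0 (Finset.Icc 1 (m-1)) := by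
        ext i
        simp only [Finset.mem_Icc, Finset.mem_insert]
        omega
      rw [h1, hwindow 0 (m-1), h2, Finset.sum_insert (by simp)]
      simp
    set W := Finset.univ.filter (fun y : Fin m → F =>
      y j0 = 0 ∧ (Finset.univ.filter fun j => y j ≠ 0).card ∈ Finset.Icc 1 k) with hW
    have hWcard : W.card
        = ∑ i ∈ Finset.Icc 1 k, (m - 1).choose i * (Fintype.card F - 1) ^ i :=
      hwindow 1 k
    -- construction of the special point y₀
    obtain ⟨y₀, hy₀0, hy₀wt, hy₀ne⟩ : ∃ y₀ : Fin m → F, y₀ j0 = 0 ∧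
        (Finset.univ.filter fun j => y₀ j ≠ 0).card = k ∧
        u * α k + ∑ j, v j * y₀ j ≠ 0 := by
      obtain ⟨s, hsE, hscard⟩ := Finset.exists_subset_card_eq
        (s := E) (n := k) (by rw [hEcard]; omega)
      set y₁ : Fin m → F := fun j => if j ∈ s then 1 else 0 with hy₁
      have hy₁supp : (Finset.univ.filter fun j => y₁ j ≠ 0) = s := by
        ext j
        simp only [Finset.mem_filter, Finset.mem_univ, true_and, hy₁]
        by_cases hjs : j ∈ s <;> simp [hjs]
      have hy₁0 : y₁ j0 = 0 := by
        rw [hy₁]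
        simp only [ite_eq_right_iff]
        intro hj0s
        exact absurd (hsE hj0s) hj0E
      have huak : u * α k ≠ 0 := mul_ne_zero hu (hα k (by omega) le_rfl)
      by_cases hc : u * α k + ∑ j, v j * y₁ j = 0
      · -- rescale
        obtain ⟨lam, hlam⟩ : ∃ lam : F, lam ∉ ({0, 1} : Finset F) := by
          by_contra h
          push_neg at h
          have h1 : (Finset.univ : Finset F).card ≤ ({0, 1} : Finset F).card :=
            Finset.card_le_card fun x _ => h x
          have h2 : ({0, 1} : Finset F).card ≤ 2 := by
            apply le_trans (Finset.card_insert_le _ _)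
            simp
          rw [Finset.card_univ] at h1
          omega
        simp only [Finset.mem_insert, Finset.mem_singleton, not_or] at hlam
        obtain ⟨hlam0, hlam1⟩ := hlam
        refine ⟨fun j => lam * y₁ j, by simp [hy₁0], ?_, ?_⟩
        · rw [← hscard, ← hy₁supp]
          congr 1
          ext j
          simp [mul_ne_zero_iff, hlam0]
        · have hsum : ∑ j, v j * (lam * y₁ j) = lam * ∑ j, v j * y₁ j := by
            rw [Finset.mul_sum]
            exact Finset.sum_congr rfl fun j _ => by ring
          rw [hsum]
          have hS : ∑ j, v j * y₁ j = -(u * α k) := by linear_combination hc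
          rw [hS]
          intro h
          have : (1 - lam) * (u * α k) = 0 := by linear_combination h
          rcases mul_eq_zero.mp this with h' | h'
          · exact hlam1 (by linear_combination -h')
          · exact huak h'
      · exact ⟨y₁, hy₁0, by rw [hy₁supp, hscard], hc⟩
    have hy₀Y : y₀ ∈ Y := (hYmem y₀).mpr hy₀0
    have hy₀W : y₀ ∈ W := by
      rw [hW, Finset.mem_filter]
      exact ⟨Finset.mem_univ _, hy₀0, by rw [hy₀wt, Finset.mem_Icc]; omega⟩
    -- the generic ≤ 1 bound for fibers
    have hone : ∀ y : Fin m → F, y j0 = 0 →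
        (∀ x ∈ Z.filter (fun x => Function.update x j0 0 = y),
          ∃ c : F, (∀ x' ∈ Z.filter (fun x => Function.update x j0 0 = y),
            u * c + ((∑ j, v j * y j) + v j0 * (x' j0)) = 0)) →
        (Z.filter (fun x => Function.update x j0 0 = y)).card ≤ 1 := by
      intro y hy hc
      rw [Finset.card_le_one]
      intro x1 h1 x2 h2
      obtain ⟨c, hc'⟩ := hc x1 h1
      have e1 := hc' x1 h1
      have e2 := hc' x2 h2
      have d1 := (hkey y hy x1 h1).1
      have d2 := (hkey y hy x2 h2).1
      have hvt : v j0 * (x1 j0) = v j0 * (x2 j0) := by linear_combination e1 - e2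
      have ht := mul_left_cancel₀ hj0 hvt
      rw [d1, d2, ht]
    -- generic fiber bound ≤ 2
    have htwo : ∀ y : Fin m → F, y j0 = 0 →
        (Z.filter (fun x => Function.update x j0 0 = y)).card ≤ 2 := by
      intro y hy
      rw [← Finset.card_filter_add_card_filter_not
        (p := fun x : Fin m → F => x j0 = 0) (s := Z.filter (fun x => Function.update x j0 0 = y))]
      have hA : ((Z.filter (fun x => Function.update x j0 0 = y)).filter
          (fun x : Fin m → F => x j0 = 0)).card ≤ 1 := by
        rw [Finset.card_le_one]
        intro x1 h1 x2 h2
        rw [Finset.mem_filter] at h1 h2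
        have d1 := (hkey y hy x1 h1.1).1
        have d2 := (hkey y hy x2 h2.1).1
        rw [d1, d2, h1.2, h2.2]
      have hB : ((Z.filter (fun x => Function.update x j0 0 = y)).filter
          (fun x : Fin m → F => ¬ x j0 = 0)).card ≤ 1 := by
        rw [Finset.card_le_one]
        intro x1 h1 x2 h2
        rw [Finset.mem_filter] at h1 h2
        obtain ⟨d1, -, e1⟩ := hkey y hy x1 h1.1
        obtain ⟨d2, -, e2⟩ := hkey y hy x2 h2.1
        have hw1 : (Finset.univ.filter fun j => x1 j ≠ 0).card
            = (Finset.univ.filter fun j => y j ≠ 0).card + 1 := by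
          conv_lhs => rw [d1]
          exact hupdwt y hy _ h1.2
        have hw2 : (Finset.univ.filter fun j => x2 j ≠ 0).card
            = (Finset.univ.filter fun j => y j ≠ 0).card + 1 := by
          conv_lhs => rw [d2]
          exact hupdwt y hy _ h2.2
        have hf : fDH k α x1 = fDH k α x2 := by
          rw [fDH, fDH, hw1, hw2]
        have hvt : v j0 * (x1 j0) = v j0 * (x2 j0) := by
          linear_combination e1 - e2 - u * hf
        have ht := mul_left_cancel₀ hj0 hvt
        rw [d1, d2, ht]
      exact le_trans (Nat.add_le_add hA hB) (by norm_num)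
    -- when the fiber has card ≤ 1: y ∉ W or y = y₀
    have honeW : ∀ y ∈ Y, (y ∉ W ∨ y = y₀) →
        (Z.filter (fun x => Function.update x j0 0 = y)).card ≤ 1 := by
      intro y hyY hcase
      have hy : y j0 = 0 := (hYmem y).mp hyY
      apply hone y hy
      intro x hx
      obtain ⟨dx, hxne, ex⟩ := hkey y hy x hx
      rcases hcase with hynW | heq
      · -- y ∉ W: weight 0 or weight > k
        have hywt : (Finset.univ.filter fun j => y j ≠ 0).card = 0 ∨
            k < (Finset.univ.filter fun j => y j ≠ 0).card := by
          by_contra hcon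
          push_neg at hcon
          apply hynW
          rw [hW, Finset.mem_filter, Finset.mem_Icc]
          exact ⟨Finset.mem_univ _, hy, by omega⟩
        rcases hywt with h0 | hgt
        · -- y = 0; every fiber element has x' j0 ≠ 0, weight 1, fDH = α 1
          refine ⟨α 1, fun x' hx' => ?_⟩
          obtain ⟨dx', hxne', ex'⟩ := hkey y hy x' hx'
          have hy0 : y = 0 := by
            funext j
            simp only [Pi.zero_apply]
            by_contra hj
            have : j ∈ Finset.univ.filter fun j => y j ≠ 0 := by simp [hj]
            rw [Finset.card_eq_zero.mp h0] at this
            exact absurd this (Finset.notMem_empty j)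
          have ht' : x' j0 ≠ 0 := by
            intro h
            apply hxne'
            rw [dx', h, hupd0 y hy, hy0]
          have hwx' : (Finset.univ.filter fun j => x' j ≠ 0).card = 1 := by
            conv_lhs => rw [dx']
            rw [hupdwt y hy _ ht', h0]
          have hfx' : fDH k α x' = α 1 := by
            rw [fDH, hwx', if_pos (by omega)]
          rw [hfx'] at ex'
          exact ex'
        · -- weight > k: fDH vanishes on the whole fiber
          refine ⟨0, fun x' hx' => ?_⟩
          obtain ⟨dx', hxne', ex'⟩ := hkey y hy x' hx'
          have hwx' : k < (Finset.univ.filter fun j => x' j ≠ 0).card := by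
            by_cases ht' : x' j0 = 0
            · have hxy : x' = y := by rw [dx', ht', hupd0 y hy]
              rw [hxy]; exact hgt
            · have hcard := hupdwt y hy _ ht'
              rw [dx']
              omega
          have hfx' : fDH k α x' = 0 := by
            rw [fDH, if_neg (by omega)]
          rw [hfx'] at ex'
          exact ex'
      · -- y = y₀ : x' j0 ≠ 0 forced, weight k+1, fDH = 0
        subst heq
        refine ⟨0, fun x' hx' => ?_⟩
        obtain ⟨dx', hxne', ex'⟩ := hkey y hy x' hx'
        have ht' : x' j0 ≠ 0 := by
          intro h
          have hxy : x' = y := by rw [dx', h, hupd0 y hy]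
          have hfx' : fDH k α x' = α k := by
            rw [fDH, hxy, hy₀wt, if_pos le_rfl]
          rw [hfx', h, mul_zero, add_zero] at ex'
          exact hy₀ne ex'
        have hwx' : (Finset.univ.filter fun j => x' j ≠ 0).card = k + 1 := by
          conv_lhs => rw [dx']
          rw [hupdwt y hy _ ht', hy₀wt]
        have hfx' : fDH k α x' = 0 := by
          rw [fDH, hwx', if_neg (by omega)]
        rw [hfx'] at ex'
        exact ex'
    -- put everything together
    rw [hYsum]
    have hsplit : ∑ y ∈ Y, (Z.filter fun x => Function.update x j0 0 = y).card
        = (Z.filter fun x => Function.update x j0 0 = y₀).card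
          + ∑ y ∈ Y.erase y₀, (Z.filter fun x => Function.update x j0 0 = y).card :=
      (Finset.add_sum_erase Y _ hy₀Y).symm
    have hbound : ∑ y ∈ Y.erase y₀, (Z.filter fun x => Function.update x j0 0 = y).card
        ≤ ∑ y ∈ Y.erase y₀, (1 + if y ∈ W then 1 else 0) := by
      apply Finset.sum_le_sum
      intro y hy
      have hyY : y ∈ Y := Finset.mem_of_mem_erase hy
      by_cases hyW : y ∈ W
      · rw [if_pos hyW]
        exact htwo y ((hYmem y).mp hyY)
      · rw [if_neg hyW]
        simpa using honeW y hyY (Or.inl hyW)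
    have hsum2 : ∑ y ∈ Y.erase y₀, (1 + if y ∈ W then 1 else 0)
        = (Y.erase y₀).card + ((Y.erase y₀) ∩ W).card := by
      rw [Finset.sum_add_distrib, Finset.sum_const, smul_eq_mul, mul_one]
      congr 1
      rw [Finset.sum_ite_mem, Finset.sum_const, smul_eq_mul, mul_one]
    have hcap : ((Y.erase y₀) ∩ W).card ≤ W.card - 1 := by
      have hsub : (Y.erase y₀) ∩ W ⊆ W.erase y₀ := by
        intro y hy
        rw [Finset.mem_inter, Finset.mem_erase] at hy
        rw [Finset.mem_erase]
        exact ⟨hy.1.1, hy.2⟩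
      calc ((Y.erase y₀) ∩ W).card ≤ (W.erase y₀).card := Finset.card_le_card hsub
        _ = W.card - 1 := Finset.card_erase_of_mem hy₀W
    have herase : (Y.erase y₀).card = Y.card - 1 := Finset.card_erase_of_mem hy₀Y
    have hy0fib : (Z.filter fun x => Function.update x j0 0 = y₀).card ≤ 1 :=
      honeW y₀ hy₀Y (Or.inr rfl)
    have hWpos : 1 ≤ W.card := Finset.card_pos.mpr ⟨y₀, hy₀W⟩
    have hYpos : 1 ≤ Y.card := Finset.card_pos.mpr ⟨y₀, hy₀Y⟩
    have hfinal := hsplit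
    omega
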